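/- Suppose the indicator random variables (1[v ∈ V_samp])_{v ∈ V} are pairwise independent with Pr[v ∈ V_samp] = deg(v)^{-1/2} for every vertex v with deg(v) ≥ 1. Then the expected number of edges of G whose both endpoints are sampled (i.e., the expected number of edges of the induced subgraph G[V_samp]) is at most n, the number of vertices of G. -/

import Mathlib

open MeasureTheory ProbabilityTheory

open Finset in
lemma handshake_sum {V : Type*} [Fintype V] [DecidableEq V] (G : SimpleGraph V)
    [DecidableRel G.Adj] (f : V → ℝ) :
    ∑ e ∈ G.edgeFinset,
      Sym2.lift ⟨fun u v => f u + f v, fun u v => add_comm _ _⟩ e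
      = ∑ v, (G.degree v : ℝ) * f v := by
  classical
  have h1 : ∑ d : G.Dart, f d.toProd.1 = ∑ v, (G.degree v : ℝ) * f v := by
    rw [← Finset.sum_fiberwise_of_maps_to (t := (Finset.univ : Finset V))
      (fun (d : G.Dart) _ => Finset.mem_univ d.toProd.1) (fun d => f d.toProd.1)]
    refine Finset.sum_congr rfl fun v _ => ?_
    have h2 : ∀ d ∈ Finset.univ.filter (fun d : G.Dart => d.toProd.1 = v),
        f d.toProd.1 = f v := fun d hd => by rw [(Finset.mem_filter.1 hd).2]
    rw [Finset.sum_congr rfl h2, Finset.sum_const, nsmul_eq_mul]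
    congr 1
    rw [← G.dart_fst_fiber_card_eq_degree v]
  have h3 : ∑ d : G.Dart, f d.toProd.1
      = ∑ e ∈ G.edgeFinset,
        Sym2.lift ⟨fun u v => f u + f v, fun u v => add_comm _ _⟩ e := by
    rw [← Finset.sum_fiberwise_of_maps_to (t := G.edgeFinset)
      (fun (d : G.Dart) _ => (SimpleGraph.mem_edgeFinset).2 d.edge_mem)
      (fun d => f d.toProd.1)]
    refine Finset.sum_congr rfl fun e he => ?_
    induction e using Sym2.ind with
    | _ u v =>
      have hadj : G.Adj u v := (SimpleGraph.mem_edgeSet G).1 (SimpleGraph.mem_edgeFinset.1 he)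
      let d : G.Dart := ⟨(u, v), hadj⟩
      have hfib : Finset.univ.filter (fun d' : G.Dart => d'.edge = s(u, v)) = {d, d.symm} :=
        d.edge_fiber
      rw [hfib, Finset.sum_insert (by simp [Finset.mem_singleton]; exact d.symm_ne.symm),
        Finset.sum_singleton, Sym2.lift_mk]
      rfl
  rw [← h3, h1]

/-- Suppose each vertex `v` of a finite simple graph `G` with `deg(v) ≥ 1` is sampled with
probability `deg(v)^{-1/2}`, vertices of degree `0` are never sampled, and the sampling
indicator random variables are pairwise independent. Then the expected number of edges of `G`
whose both endpoints are sampled (i.e., the expected number of edges of the induced subgraph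
`G[V_samp]`) is at most `n`, the number of vertices of `G`. -/
theorem expected_sampled_edges_le {V Ω : Type*} [Fintype V] [DecidableEq V] [MeasurableSpace Ω]
    (G : SimpleGraph V) [DecidableRel G.Adj]
    (P : Measure Ω) [IsProbabilityMeasure P]
    (Vsamp : Ω → Finset V)
    (hmeas : ∀ v : V, MeasurableSet {ω | v ∈ Vsamp ω})
    (hprob : ∀ v : V, 1 ≤ G.degree v →
      (P {ω | v ∈ Vsamp ω}).toReal = (G.degree v : ℝ) ^ (-(1 : ℝ) / 2))
    (hzero : ∀ v : V, G.degree v = 0 → ∀ ω : Ω, v ∉ Vsamp ω)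
    (hpairwise : ∀ u v : V, u ≠ v →
      IndepFun (fun ω => if u ∈ Vsamp ω then (1 : ℝ) else 0)
        (fun ω => if v ∈ Vsamp ω then (1 : ℝ) else 0) P) :
    (∫ ω, ((G.edgeFinset.filter (fun e => ∀ x ∈ e, x ∈ Vsamp ω)).card : ℝ) ∂P)
      ≤ (Fintype.card V : ℝ) := by
  classical
  set q : V → ℝ := fun v => (P {ω | v ∈ Vsamp ω}).toReal with hqdef
  -- indicators are indicator functions
  have hind : ∀ v : V, (fun ω => if v ∈ Vsamp ω then (1 : ℝ) else 0)
      = Set.indicator {ω | v ∈ Vsamp ω} (fun _ => (1 : ℝ)) := by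
    intro v; funext ω; simp [Set.indicator_apply]
  have hint : ∀ v : V, Integrable (fun ω => if v ∈ Vsamp ω then (1 : ℝ) else 0) P := by
    intro v
    rw [hind v]
    exact (integrable_indicator_iff (hmeas v)).2
      (integrableOn_const (measure_ne_top _ _))
  have hintg : ∀ v : V, ∫ ω, (if v ∈ Vsamp ω then (1 : ℝ) else 0) ∂P = q v := by
    intro v
    rw [show (fun ω => if v ∈ Vsamp ω then (1 : ℝ) else 0)
        = Set.indicator {ω | v ∈ Vsamp ω} (fun _ => (1 : ℝ)) from hind v,
      integral_indicator_const (1 : ℝ) (hmeas v), smul_eq_mul, mul_one, measureReal_def]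
  -- edge indicators
  have hprod : ∀ u v : V, (fun ω => if ∀ x ∈ s(u, v), x ∈ Vsamp ω then (1 : ℝ) else 0)
      = (fun ω => if u ∈ Vsamp ω then (1 : ℝ) else 0)
        * (fun ω => if v ∈ Vsamp ω then (1 : ℝ) else 0) := by
    intro u v
    funext ω
    have hiff : (∀ x ∈ s(u, v), x ∈ Vsamp ω) ↔ (u ∈ Vsamp ω ∧ v ∈ Vsamp ω) := by
      constructor
      · intro h; exact ⟨h u (by simp), h v (by simp)⟩
      · rintro ⟨h1, h2⟩ x hx
        rcases Sym2.mem_iff.1 hx with rfl | rfl <;> assumption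
    by_cases hu : u ∈ Vsamp ω <;> by_cases hv : v ∈ Vsamp ω <;>
      simp [hiff, hu, hv]
  have hinte : ∀ e ∈ G.edgeFinset,
      Integrable (fun ω => if ∀ x ∈ e, x ∈ Vsamp ω then (1 : ℝ) else 0) P := by
    intro e he
    induction e using Sym2.ind with
    | _ u v =>
      rw [hprod u v]
      have hadj : G.Adj u v := (SimpleGraph.mem_edgeSet G).1 (SimpleGraph.mem_edgeFinset.1 he)
      exact (hpairwise u v hadj.ne).integrable_mul (hint u) (hint v)
  -- pointwise expansion of card
  have hcard : ∀ ω : Ω, ((G.edgeFinset.filter (fun e => ∀ x ∈ e, x ∈ Vsamp ω)).card : ℝ)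
      = ∑ e ∈ G.edgeFinset, (if ∀ x ∈ e, x ∈ Vsamp ω then (1 : ℝ) else 0) := by
    intro ω
    rw [Finset.card_filter]
    push_cast
    rfl
  rw [show (fun ω => ((G.edgeFinset.filter (fun e => ∀ x ∈ e, x ∈ Vsamp ω)).card : ℝ))
      = fun ω => ∑ e ∈ G.edgeFinset, (if ∀ x ∈ e, x ∈ Vsamp ω then (1 : ℝ) else 0)
    from funext hcard, integral_finset_sum _ hinte]
  -- bound the sum
  set f : V → ℝ := fun v => (2 * (G.degree v : ℝ))⁻¹ with hfdef
  have key : ∑ e ∈ G.edgeFinset,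
      (∫ ω, (if ∀ x ∈ e, x ∈ Vsamp ω then (1 : ℝ) else 0) ∂P)
      ≤ ∑ e ∈ G.edgeFinset,
        Sym2.lift ⟨fun u v => f u + f v, fun u v => add_comm _ _⟩ e := by
    refine Finset.sum_le_sum fun e he => ?_
    induction e using Sym2.ind with
    | _ u v =>
      have hadj : G.Adj u v := (SimpleGraph.mem_edgeSet G).1 (SimpleGraph.mem_edgeFinset.1 he)
      have hdu : 1 ≤ G.degree u := G.degree_pos_iff_exists_adj u |>.2 ⟨v, hadj⟩
      have hdv : 1 ≤ G.degree v := G.degree_pos_iff_exists_adj v |>.2 ⟨u, hadj.symm⟩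
      rw [hprod u v, (hpairwise u v hadj.ne).integral_mul_eq_mul_integral (hint u).aestronglyMeasurable
          (hint v).aestronglyMeasurable,
        hintg u, hintg v, Sym2.lift_mk]
      rw [hqdef]
      simp only
      rw [hprob u hdu, hprob v hdv]
      have hposu : (0 : ℝ) < (G.degree u : ℝ) := by exact_mod_cast hdu
      have hposv : (0 : ℝ) < (G.degree v : ℝ) := by exact_mod_cast hdv
      have hru : ((G.degree u : ℝ)) ^ (-(1 : ℝ) / 2) = Real.sqrt ((G.degree u : ℝ))⁻¹ := by
        rw [neg_div, Real.rpow_neg hposu.le, ← Real.sqrt_eq_rpow, Real.sqrt_inv]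
      have hrv : ((G.degree v : ℝ)) ^ (-(1 : ℝ) / 2) = Real.sqrt ((G.degree v : ℝ))⁻¹ := by
        rw [neg_div, Real.rpow_neg hposv.le, ← Real.sqrt_eq_rpow, Real.sqrt_inv]
      rw [hru, hrv]
      set a := Real.sqrt ((G.degree u : ℝ))⁻¹
      set b := Real.sqrt ((G.degree v : ℝ))⁻¹
      have h2ab : 2 * a * b ≤ a ^ 2 + b ^ 2 := two_mul_le_add_sq a b
      have ha2 : a ^ 2 = ((G.degree u : ℝ))⁻¹ := Real.sq_sqrt (by positivity)
      have hb2 : b ^ 2 = ((G.degree v : ℝ))⁻¹ := Real.sq_sqrt (by positivity)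
      have : a * b ≤ (((G.degree u : ℝ))⁻¹ + ((G.degree v : ℝ))⁻¹) / 2 := by
        rw [← ha2, ← hb2]; linarith
    -- f u + f v equals that
      have hfu : f u = ((G.degree u : ℝ))⁻¹ / 2 := by
        rw [hfdef]; simp only; rw [mul_inv, inv_eq_one_div]; ring
      have hfv : f v = ((G.degree v : ℝ))⁻¹ / 2 := by
        rw [hfdef]; simp only; rw [mul_inv, inv_eq_one_div]; ring
      rw [hfu, hfv]
      linarith
  refine key.trans ?_
  rw [handshake_sum]
  calc ∑ v, (G.degree v : ℝ) * f v ≤ ∑ v : V, (1 : ℝ) := by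
        refine Finset.sum_le_sum fun v _ => ?_
        rw [hfdef]; simp only
        rcases Nat.eq_zero_or_pos (G.degree v) with h | h
        · simp [h]
        · have hpos : (0 : ℝ) < (G.degree v : ℝ) := by exact_mod_cast h
          rw [mul_inv, ← mul_assoc, mul_comm ((G.degree v : ℝ)) _, mul_assoc,
            mul_inv_cancel₀ hpos.ne', mul_one]
          norm_num
    _ = (Fintype.card V : ℝ) := by simp
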